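/- Let f be a completely multiplicative arithmetic function with complex values and let s be a complex number such that ∑_{n=1}^{∞} f(n)/n^s converges absolutely and ∑_{n=1}^{∞} ω(n) f(n)/n^s converges absolutely. Then ∑_{n=1}^{∞} ω(n) f(n)/n^s = (∑_{n=1}^{∞} f(n)/n^s) · (∑_p f(p)/p^s), where the last sum runs over all primes p. -/
import Mathlib

open ArithmeticFunction

-- finset of prime divisors as Nat.Primes
noncomputable def primesOf (n : ℕ) : Finset Nat.Primes :=
  n.primeFactors.attach.map ⟨fun x => ⟨x.1, Nat.prime_of_mem_primeFactors x.2⟩,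
    by intro a b hab; have := congrArg Subtype.val hab; exact Subtype.ext this⟩

lemma mem_primesOf {n : ℕ} (hn : n ≠ 0) (p : Nat.Primes) :
    p ∈ primesOf n ↔ (p : ℕ) ∣ n := by
  constructor
  · intro hp
    obtain ⟨⟨q, hq⟩, -, rfl⟩ := Finset.mem_map.1 hp
    exact Nat.dvd_of_mem_primeFactors hq
  · intro hd
    exact Finset.mem_map.2 ⟨⟨p, Nat.mem_primeFactors.2 ⟨p.2, hd, hn⟩⟩, Finset.mem_attach _ _, rfl⟩

lemma card_primesOf (n : ℕ) : (primesOf n).card = n.primeFactors.card := by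
  simp [primesOf]

lemma aux_tsum {M : Type*} [AddCommMonoid M] [TopologicalSpace M] [T2Space M]
    {n : ℕ} (hn : n ≠ 0) (c : M) :
    ∑' p : Nat.Primes, (if (p : ℕ) ∣ n then c else 0) = n.primeFactors.card • c := by
  rw [tsum_eq_sum (s := primesOf n) (fun p hp => if_neg (fun hd => hp ((mem_primesOf hn p).2 hd)))]
  rw [Finset.sum_congr rfl (fun p hp => if_pos ((mem_primesOf hn p).1 hp)),
    Finset.sum_const, card_primesOf]

/-- For a completely multiplicative arithmetic function `f` and `s ∈ ℂ`
such that `∑ f(n)/n^s` and `∑ ω(n) f(n)/n^s` converge absolutely,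
`∑ ω(n) f(n)/n^s = (∑ f(n)/n^s) · (∑_p f(p)/p^s)`. -/
theorem stmt_13 (f : ArithmeticFunction ℂ) (hf1 : f 1 = 1)
    (hf : ∀ m n : ℕ, f (m * n) = f m * f n) (s : ℂ)
    (h1 : Summable fun n : ℕ => ‖f n / (n : ℂ) ^ s‖)
    (h2 : Summable fun n : ℕ => ‖(n.primeFactors.card : ℂ) * f n / (n : ℂ) ^ s‖) :
    ∑' n : ℕ, (n.primeFactors.card : ℂ) * f n / (n : ℂ) ^ s =
      (∑' n : ℕ, f n / (n : ℂ) ^ s) *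
        ∑' p : Nat.Primes, f (p : ℕ) / ((p : ℕ) : ℂ) ^ s := by
  set g : ℕ → ℂ := fun n => f n / (n : ℂ) ^ s with hg_def
  have hg0 : g 0 = 0 := by simp [hg_def]
  have hgmul : ∀ p m : ℕ, g (p * m) = g p * g m := by
    intro p m
    rcases eq_or_ne p 0 with rfl | hp
    · simp [hg_def]
    rcases eq_or_ne m 0 with rfl | hm
    · simp [hg_def]
    simp only [hg_def, hf, Nat.cast_mul, Complex.natCast_mul_natCast_cpow, div_mul_div_comm]
  -- the two-variable function
  set F : ℕ × Nat.Primes → ℂ := fun z => if (z.2 : ℕ) ∣ z.1 then g z.1 else 0 with hF_def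
  have hFnorm : ∀ z : ℕ × Nat.Primes, ‖F z‖ = if (z.2 : ℕ) ∣ z.1 then ‖g z.1‖ else 0 := by
    intro z; by_cases h : (z.2 : ℕ) ∣ z.1 <;> simp [hF_def, h]
  have h2' : Summable fun n : ℕ => (n.primeFactors.card : ℝ) * ‖g n‖ := by
    refine h2.congr fun n => ?_
    rw [mul_div_assoc, norm_mul]
    simp [hg_def]
  have hGsum : Summable fun z => ‖F z‖ := by
    rw [summable_prod_of_nonneg (fun z => norm_nonneg _)]
    constructor
    · intro n
      rcases eq_or_ne n 0 with rfl | hn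
      · exact summable_of_ne_finset_zero (s := ∅) (fun p _ => by simp [hFnorm, hg0])
      · exact summable_of_ne_finset_zero (s := primesOf n)
          (fun p hp => by rw [hFnorm]; exact if_neg fun hd => hp ((mem_primesOf hn p).2 hd))
    · refine h2'.congr fun n => ?_
      rcases eq_or_ne n 0 with rfl | hn
      · simp [hFnorm, hg0]
      · rw [show (fun p : Nat.Primes => ‖F (n, p)‖) =
            fun p : Nat.Primes => if (p : ℕ) ∣ n then ‖g n‖ else 0 from funext fun p => hFnorm _,
          aux_tsum hn, nsmul_eq_mul]
  have hFsum : Summable F := Summable.of_norm hGsum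
  have hgsum : Summable g := Summable.of_norm h1
  -- fiber over p
  have hfiber : ∀ p : Nat.Primes, ∑' n : ℕ, F (n, p) = g p * ∑' n, g n := by
    intro p
    have hinj : Function.Injective (fun m : ℕ => (p : ℕ) * m) :=
      fun a b h => Nat.eq_of_mul_eq_mul_left p.2.pos h
    have hsupp : ∀ n, n ∉ Set.range (fun m : ℕ => (p : ℕ) * m) → F (n, p) = 0 := by
      intro n hn
      rw [hF_def]
      refine if_neg fun hd => hn ?_
      obtain ⟨m, hm⟩ := hd
      exact ⟨m, hm.symm⟩
    calc ∑' n : ℕ, F (n, p) = ∑' m : ℕ, F ((p : ℕ) * m, p) := (hinj.tsum_eq (Function.support_subset_iff'.mpr hsupp)).symm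
      _ = ∑' m : ℕ, g ((p : ℕ) * m) := tsum_congr fun m => if_pos ⟨m, rfl⟩
      _ = ∑' m : ℕ, g p * g m := tsum_congr fun m => hgmul _ _
      _ = g p * ∑' n, g n := tsum_mul_left
  -- fiber over n
  have hfiber2 : ∀ n : ℕ, ∑' p : Nat.Primes, F (n, p) = (n.primeFactors.card : ℂ) * g n := by
    intro n
    rcases eq_or_ne n 0 with rfl | hn
    · simp [hF_def, hg0]
    · rw [show (fun p : Nat.Primes => F (n, p)) =
          fun p : Nat.Primes => if (p : ℕ) ∣ n then g n else 0 from rfl,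
        aux_tsum hn, nsmul_eq_mul]
  calc ∑' n : ℕ, (n.primeFactors.card : ℂ) * f n / (n : ℂ) ^ s
      = ∑' n : ℕ, ∑' p : Nat.Primes, F (n, p) := by
        refine tsum_congr fun n => ?_
        rw [hfiber2 n, mul_div_assoc]
    _ = ∑' p : Nat.Primes, ∑' n : ℕ, F (n, p) := (Summable.tsum_comm (f := fun n (p : Nat.Primes) => F (n, p)) hFsum).symm
    _ = ∑' p : Nat.Primes, g p * ∑' n, g n := tsum_congr hfiber
    _ = (∑' n, g n) * ∑' p : Nat.Primes, g p := by rw [tsum_mul_right, mul_comm]
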